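/- There is no formula φ of L_{Δ,□,◇} such that for every fuzzy frame F = ⟨W,R⟩: φ is KbiG-valid on F if and only if sup{R(w,w') : w,w' ∈ W} < 1/2. Likewise, there is no formula ψ of L_{Δ,□,◇} such that for every fuzzy frame F: ψ is KbiG-valid on F if and only if for every w ∈ W there exists w' with R(w,w') > 1/2. -/

import Mathlib

noncomputable def Gimp (x y : ℝ) : ℝ := if x ≤ y then 1 else y

inductive BFml : Type
  | var : ℕ → BFml
  | and : BFml → BFml → BFml
  | or : BFml → BFml → BFml
  | imp : BFml → BFml → BFml
  | snot : BFml → BFml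
  | delta : BFml → BFml
  | box : BFml → BFml
  | dia : BFml → BFml

noncomputable def BFml.eval {W : Type} (R : W → W → ℝ) (v : ℕ → W → ℝ) : BFml → W → ℝ
  | .var p, w => v p w
  | .and φ χ, w => min (BFml.eval R v φ w) (BFml.eval R v χ w)
  | .or φ χ, w => max (BFml.eval R v φ w) (BFml.eval R v χ w)
  | .imp φ χ, w => Gimp (BFml.eval R v φ w) (BFml.eval R v χ w)
  | .snot φ, w => if BFml.eval R v φ w = 0 then 1 else 0
  | .delta φ, w => if BFml.eval R v φ w = 1 then 1 else 0
  | .box φ, w => sInf (Set.range fun w' => Gimp (R w w') (BFml.eval R v φ w'))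
  | .dia φ, w => sSup (Set.range fun w' => min (R w w') (BFml.eval R v φ w'))

def KbiGValid {W : Type} (R : W → W → ℝ) (φ : BFml) : Prop :=
  ∀ v : ℕ → W → ℝ, (∀ p w, v p w ∈ Set.Icc (0:ℝ) 1) → ∀ w : W, BFml.eval R v φ w = 1

/-! Auxiliary: a piecewise-linear strictly increasing map with h 0 = 0, h c = c', h 1 = 1. -/

noncomputable def hmap (c c' x : ℝ) : ℝ :=
  if x ≤ c then x * (c' / c) else c' + (x - c) * ((1 - c') / (1 - c))

lemma hmap_strictMono {c c' : ℝ} (hc : 0 < c) (hc1 : c < 1) (hc' : 0 < c') (hc'1 : c' < 1) :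
    StrictMono (hmap c c') := by
  intro x y hxy
  unfold hmap
  split_ifs with hx hy hy
  · exact mul_lt_mul_of_pos_right hxy (div_pos hc' hc)
  · have h1 : x * (c' / c) ≤ c' := by
      have := mul_le_mul_of_nonneg_right hx (le_of_lt (div_pos hc' hc))
      calc x * (c' / c) ≤ c * (c' / c) := this
        _ = c' := by field_simp
    have h2 : 0 < (y - c) * ((1 - c') / (1 - c)) :=
      mul_pos (by linarith) (div_pos (by linarith) (by linarith))
    linarith
  · linarith
  · have hk : 0 < (1 - c') / (1 - c) := div_pos (by linarith) (by linarith)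
    have := mul_lt_mul_of_pos_right (sub_lt_sub_right hxy c) hk
    linarith

lemma hmap_zero {c c' : ℝ} (hc : 0 < c) : hmap c c' 0 = 0 := by
  simp [hmap, hc.le]

lemma hmap_one {c c' : ℝ} (hc : 0 < c) (hc1 : c < 1) : hmap c c' 1 = 1 := by
  have : ¬ (1 : ℝ) ≤ c := by linarith
  have h1c : (1 : ℝ) - c ≠ 0 := by linarith
  simp only [hmap, this, if_false]
  field_simp
  ring

lemma hmap_c {c c' : ℝ} (hc : 0 < c) : hmap c c' c = c' := by
  simp only [hmap, le_refl, if_true]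
  field_simp

lemma hmap_Gimp {c c' : ℝ} (hc : 0 < c) (hc1 : c < 1) (hc' : 0 < c') (hc'1 : c' < 1)
    (a b : ℝ) : hmap c c' (Gimp a b) = Gimp (hmap c c' (a)) (hmap c c' b) := by
  have hm := hmap_strictMono hc hc1 hc' hc'1
  unfold Gimp
  by_cases hab : a ≤ b
  · simp [hab, hm.le_iff_le.mpr hab, hmap_one hc hc1]
  · have : ¬ hmap c c' a ≤ hmap c c' b := fun h => hab (hm.le_iff_le.mp h)
    simp [hab, this]

lemma range_unit {α : Type*} (f : Unit → α) : Set.range f = {f ()} := by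
  ext x
  constructor
  · rintro ⟨y, rfl⟩; simp
  · rintro rfl; exact ⟨(), rfl⟩

lemma eval_hmap {c c' : ℝ} (hc : 0 < c) (hc1 : c < 1) (hc' : 0 < c') (hc'1 : c' < 1)
    (v : ℕ → Unit → ℝ) (φ : BFml) :
    BFml.eval (fun _ _ : Unit => c') (fun p w => hmap c c' (v p w)) φ () =
      hmap c c' (BFml.eval (fun _ _ : Unit => c) v φ ()) := by
  have hm := hmap_strictMono hc hc1 hc' hc'1
  induction φ with
  | var p => rfl
  | and φ χ ihφ ihχ =>
      simp only [BFml.eval, ihφ, ihχ]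
      exact (hm.monotone.map_min).symm
  | or φ χ ihφ ihχ =>
      simp only [BFml.eval, ihφ, ihχ]
      exact (hm.monotone.map_max).symm
  | imp φ χ ihφ ihχ =>
      simp only [BFml.eval, ihφ, ihχ]
      exact (hmap_Gimp hc hc1 hc' hc'1 _ _).symm
  | snot φ ihφ =>
      simp only [BFml.eval, ihφ]
      by_cases h0 : BFml.eval (fun _ _ : Unit => c) v φ () = 0
      · simp [h0, hmap_zero hc, hmap_one hc hc1]
      · have : hmap c c' (BFml.eval (fun _ _ : Unit => c) v φ ()) ≠ 0 := by
          rw [← hmap_zero (c' := c') hc]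
          exact fun h => h0 (hm.injective h)
        simp [h0, this, hmap_zero hc]
  | delta φ ihφ =>
      simp only [BFml.eval, ihφ]
      by_cases h1 : BFml.eval (fun _ _ : Unit => c) v φ () = 1
      · simp [h1, hmap_one hc hc1]
      · have : hmap c c' (BFml.eval (fun _ _ : Unit => c) v φ ()) ≠ 1 := by
          rw [← hmap_one (c' := c') hc hc1]
          exact fun h => h1 (hm.injective h)
        simp [h1, this, hmap_zero hc]
  | box φ ihφ =>
      simp only [BFml.eval]
      rw [range_unit, range_unit, csInf_singleton, csInf_singleton, ihφ,
        hmap_Gimp hc hc1 hc' hc'1 c, hmap_c hc]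
  | dia φ ihφ =>
      simp only [BFml.eval]
      rw [range_unit, range_unit, csSup_singleton, csSup_singleton, ihφ,
        hm.monotone.map_min, hmap_c hc]

lemma valid_transfer {c c' : ℝ} (hc : 0 < c) (hc1 : c < 1) (hc' : 0 < c') (hc'1 : c' < 1)
    (φ : BFml) (hv : KbiGValid (fun _ _ : Unit => c') φ) :
    KbiGValid (fun _ _ : Unit => c) φ := by
  intro v hvb w
  have hm := hmap_strictMono hc hc1 hc' hc'1
  have hb : ∀ p w, hmap c c' (v p w) ∈ Set.Icc (0:ℝ) 1 := by
    intro p w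
    have h := hvb p w
    constructor
    · rw [← hmap_zero (c' := c') hc]; exact hm.monotone h.1
    · rw [← hmap_one (c' := c') hc hc1]; exact hm.monotone h.2
  have := hv (fun p w => hmap c c' (v p w)) hb ()
  rw [eval_hmap hc hc1 hc' hc'1] at this
  have h1 : hmap c c' (BFml.eval (fun _ _ : Unit => c) v φ ()) = hmap c c' 1 := by
    rw [this, hmap_one hc hc1]
  have := hm.injective h1
  cases w
  exact this

theorem statement8 :
    (¬ ∃ φ : BFml, ∀ (W : Type) (_ : Nonempty W) (R : W → W → ℝ),
      (∀ w w', R w w' ∈ Set.Icc (0:ℝ) 1) →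
      (KbiGValid R φ ↔ sSup {x : ℝ | ∃ w w', x = R w w'} < 1/2)) ∧
    (¬ ∃ ψ : BFml, ∀ (W : Type) (_ : Nonempty W) (R : W → W → ℝ),
      (∀ w w', R w w' ∈ Set.Icc (0:ℝ) 1) →
      (KbiGValid R ψ ↔ ∀ w : W, ∃ w' : W, R w w' > 1/2)) := by
  have hset : ∀ r : ℝ, {x : ℝ | ∃ _ _ : Unit, x = r} = {r} := by
    intro r; ext x; simp
  constructor
  · rintro ⟨φ, hφ⟩
    have h14 := hφ Unit ⟨()⟩ (fun _ _ => 1/4) (by intro w w'; norm_num)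
    have h34 := hφ Unit ⟨()⟩ (fun _ _ => 3/4) (by intro w w'; norm_num)
    rw [hset, csSup_singleton] at h14
    rw [hset, csSup_singleton] at h34
    have hv14 : KbiGValid (fun _ _ : Unit => (1/4 : ℝ)) φ := h14.mpr (by norm_num)
    have hv34 : KbiGValid (fun _ _ : Unit => (3/4 : ℝ)) φ :=
      valid_transfer (by norm_num) (by norm_num) (by norm_num) (by norm_num) φ hv14
    have := h34.mp hv34
    norm_num at this
  · rintro ⟨ψ, hψ⟩
    have h14 := hψ Unit ⟨()⟩ (fun _ _ => 1/4) (by intro w w'; norm_num)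
    have h34 := hψ Unit ⟨()⟩ (fun _ _ => 3/4) (by intro w w'; norm_num)
    have hv34 : KbiGValid (fun _ _ : Unit => (3/4 : ℝ)) ψ := by
      apply h34.mpr; intro w; exact ⟨(), by norm_num⟩
    have hv14 : KbiGValid (fun _ _ : Unit => (1/4 : ℝ)) ψ :=
      valid_transfer (by norm_num) (by norm_num) (by norm_num) (by norm_num) ψ hv34
    obtain ⟨_, h⟩ := h14.mp hv14 ()
    norm_num at h
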